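/- For every m ≥ 1 and prime p, consider the rank-1 lattice Λ = ℤ_p · v ⊆ ℚ_p^m where v = (1,1,…,1). Its dual (within the line spanned by v, via the standard pairing) is Λ* = ℤ_p · (1/m)(1,…,1), and with respect to the maximum norm one has λ̃_1(Λ) · λ̃_1(Λ*) = |1/m|_p. In particular, taking m = p^l, the product λ̃_1(Λ)·λ̃_1(Λ*) = p^{-l} can be made arbitrarily small, so no uniform lower/upper bound relating λ̃_1(Λ) and λ̃_1(Λ*) independent of m exists for non-full-rank lattices. -/

import Mathlib

open scoped BigOperators

/-- The `i`-th successive maximum of a set `Λ ⊆ ℚ_p^n` with respect to a norm `N`: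
the largest `r` such that `Λ` contains `i` linearly independent vectors of `N`-norm `≥ r`. -/
noncomputable def succMax (p : ℕ) [Fact p.Prime] (n : ℕ)
    (N : (Fin n → ℚ_[p]) → ℝ) (Λ : Set (Fin n → ℚ_[p])) (i : ℕ) : ℝ :=
  sSup {r : ℝ | ∃ s : Fin i → (Fin n → ℚ_[p]),
    (∀ k, s k ∈ Λ) ∧ LinearIndependent ℚ_[p] s ∧ ∀ k, r ≤ N (s k)}

/-- The `ℤ_p`-lattice spanned by the vectors `b`. -/
def latticeSet (p : ℕ) [Fact p.Prime] {n m : ℕ} (b : Fin m → (Fin n → ℚ_[p])) :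
    Set (Fin n → ℚ_[p]) :=
  {x | ∃ c : Fin m → ℤ_[p], x = ∑ j, (c j : ℚ_[p]) • b j}

/-- The dual lattice of `Λ` w.r.t. the standard bilinear pairing `⟨x,y⟩ = ∑ x j * y j`. -/
def dualSet (p : ℕ) [Fact p.Prime] {n : ℕ} (Λ : Set (Fin n → ℚ_[p])) :
    Set (Fin n → ℚ_[p]) :=
  {y | ∀ x ∈ Λ, ∃ z : ℤ_[p], (z : ℚ_[p]) = ∑ j, x j * y j}

/-- A family `b` is `N`-orthogonal if `N (∑ cᵢ bᵢ) = maxᵢ N (cᵢ bᵢ)` for all scalars. -/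
def IsOrthogonal (p : ℕ) [Fact p.Prime] {n m : ℕ}
    (N : (Fin n → ℚ_[p]) → ℝ) (b : Fin m → (Fin n → ℚ_[p])) : Prop :=
  ∀ c : Fin m → ℚ_[p], N (∑ i, c i • b i) = ⨆ i, N (c i • b i)


lemma succMax_line_aux (p : ℕ) [Fact p.Prime] {m : ℕ} (w : Fin m → ℚ_[p]) (hw : w ≠ 0) :
    succMax p m (fun x => ‖x‖) {x | ∃ c : ℤ_[p], x = (c : ℚ_[p]) • w} 1 = ‖w‖ := by
  unfold succMax
  have hset : {r : ℝ | ∃ s : Fin 1 → (Fin m → ℚ_[p]),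
      (∀ k, s k ∈ {x | ∃ c : ℤ_[p], x = (c : ℚ_[p]) • w}) ∧ LinearIndependent ℚ_[p] s ∧
      ∀ k, r ≤ ‖s k‖} = Set.Iic ‖w‖ := by
    ext r
    constructor
    · rintro ⟨s, hs, hli, hle⟩
      obtain ⟨c, hc⟩ := hs 0
      have h1 := hle 0
      rw [hc, norm_smul] at h1
      have h2 : ‖(c : ℚ_[p])‖ ≤ 1 := c.norm_le_one
      calc r ≤ ‖(c : ℚ_[p])‖ * ‖w‖ := h1
        _ ≤ 1 * ‖w‖ := by gcongr
        _ = ‖w‖ := one_mul _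
    · intro hr
      exact ⟨fun _ => w, fun k => ⟨1, by simp⟩, linearIndependent_unique_iff.mpr hw,
        fun k => hr⟩
  rw [hset, csSup_Iic]

/-- for the rank-1 lattice `ℤ_p·(1,…,1) ⊆ ℚ_p^m`, the dual inside the
spanned line is `ℤ_p·(1/m)(1,…,1)`, and `λ̃₁(Λ)·λ̃₁(Λ*) = |1/m|ₚ`, which can be made
arbitrarily small. -/
theorem stmt8 {p : ℕ} [Fact p.Prime] {m : ℕ} (hm : 1 ≤ m) :
    let v : Fin m → ℚ_[p] := fun _ => 1
    let Λ : Set (Fin m → ℚ_[p]) := {x | ∃ c : ℤ_[p], x = (c : ℚ_[p]) • v}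
    let Λs : Set (Fin m → ℚ_[p]) :=
      {y | (∃ a : ℚ_[p], y = a • v) ∧
        ∀ x ∈ Λ, ∃ z : ℤ_[p], (z : ℚ_[p]) = ∑ j, x j * y j}
    Λs = {y | ∃ c : ℤ_[p], y = (c : ℚ_[p]) • ((m : ℚ_[p])⁻¹ • v)} ∧
    succMax p m (fun w => ‖w‖) Λ 1 * succMax p m (fun w => ‖w‖) Λs 1
      = ‖((m : ℚ_[p]))⁻¹‖ := by
  intro v Λ Λs
  haveI : Nonempty (Fin m) := ⟨⟨0, hm⟩⟩
  have hm0 : (m : ℚ_[p]) ≠ 0 := Nat.cast_ne_zero.mpr (by omega)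
  have hv : v ≠ 0 := by
    intro h
    have := congrFun h ⟨0, hm⟩
    simp [v] at this
  have hnv : ‖v‖ = 1 := by
    have : v = (1 : Fin m → ℚ_[p]) := rfl
    rw [this, norm_one]
  have hw : (m : ℚ_[p])⁻¹ • v ≠ 0 := smul_ne_zero (inv_ne_zero hm0) hv
  have hset : Λs = {y | ∃ c : ℤ_[p], y = (c : ℚ_[p]) • ((m : ℚ_[p])⁻¹ • v)} := by
    ext y
    constructor
    · rintro ⟨⟨a, rfl⟩, hdual⟩
      obtain ⟨z, hz⟩ := hdual v ⟨1, by simp⟩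
      have hsum : (z : ℚ_[p]) = (m : ℚ_[p]) * a := by
        rw [hz]
        simp [v, Finset.sum_const, mul_comm]
      refine ⟨z, ?_⟩
      rw [smul_smul, hsum]
      congr 1
      field_simp
    · rintro ⟨c, rfl⟩
      refine ⟨⟨(c : ℚ_[p]) * (m : ℚ_[p])⁻¹, by rw [smul_smul]⟩, ?_⟩
      rintro x ⟨d, rfl⟩
      refine ⟨d * c, ?_⟩
      push_cast
      simp only [Pi.smul_apply, smul_eq_mul, v]
      rw [Finset.sum_const]
      simp only [Finset.card_univ, Fintype.card_fin, nsmul_eq_mul]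
      field_simp
  refine ⟨hset, ?_⟩
  have h1 : succMax p m (fun w => ‖w‖) Λ 1 = ‖v‖ := succMax_line_aux p v hv
  have h2 : succMax p m (fun w => ‖w‖) Λs 1 = ‖(m : ℚ_[p])⁻¹ • v‖ := by
    rw [show Λs = {y | ∃ c : ℤ_[p], y = (c : ℚ_[p]) • ((m : ℚ_[p])⁻¹ • v)} from hset]
    exact succMax_line_aux p _ hw
  rw [h1, h2, hnv, norm_smul, hnv]
  ring
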